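/- (Braided form of the fused boundary operator.) Let I ≥ 1 be an integer, 0 < q < 1, 𝔞, 𝔠 ∈ ℝ, and let u ∈ ℂ \ {0} be such that 𝔠·(u q^{(I+1)/2−a})² + u q^{(I+1)/2−a} − 𝔞 ≠ 0 for each 1 ≤ a ≤ I and u²·q^m ≠ 1 for every integer m with −I ≤ m ≤ I. Then K̊^I(u) = ∏_{a = I,…,1} [ K(u q^{(I+1)/2−a})₁ ∘ ∏_{b = a−1,…,1} Ř(u² q^{I+1−a−b})_{a−b} ], where both products are taken left to right in decreasing order of the index, K(v)₁ denotes K(v) acting on the first tensor factor of (ℂ²)^{⊗I}, and Ř(v)_m acts on the m-th and (m+1)-th tensor factors. -/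

import Mathlib

open scoped Matrix ComplexOrder

noncomputable section

/-- Entries `R(u)_{a,b}^{c,d}` of the unfused stochastic six-vertex `R`-matrix. -/
def Rent (q u : ℂ) (a b c d : Fin 2) : ℂ :=
  if a = 0 ∧ b = 0 ∧ c = 0 ∧ d = 0 then 1
  else if a = 1 ∧ b = 1 ∧ c = 1 ∧ d = 1 then 1
  else if a = 0 ∧ b = 1 ∧ c = 0 ∧ d = 1 then q * (1 - u) / (1 - q * u)
  else if a = 0 ∧ b = 1 ∧ c = 1 ∧ d = 0 then (1 - q) / (1 - q * u)
  else if a = 1 ∧ b = 0 ∧ c = 0 ∧ d = 1 then u * (1 - q) / (1 - q * u)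
  else if a = 1 ∧ b = 0 ∧ c = 1 ∧ d = 0 then (1 - u) / (1 - q * u)
  else 0

/-- The unfused `R`-matrix as an operator (matrix) on `ℂ² ⊗ ℂ²`;
row index `(c,d)` (output), column index `(a,b)` (input), so that
`R(u)(e_a ⊗ e_b) = Σ_{c,d} R(u)_{a,b}^{c,d} e_c ⊗ e_d`. -/
def Rmat (q u : ℂ) : Matrix (Fin 2 × Fin 2) (Fin 2 × Fin 2) ℂ :=
  fun cd ab => Rent q u ab.1 ab.2 cd.1 cd.2

/-- Entries `K(u)_a^d` of the unfused boundary `K`-matrix, parameters `fa = 𝔞`, `fc = 𝔠`. -/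
def Kent (fa fc u : ℂ) (a d : Fin 2) : ℂ :=
  if a = 0 ∧ d = 0 then ((fc - fa) * u ^ 2 + u) / (fc * u ^ 2 + u - fa)
  else if a = 0 ∧ d = 1 then fa * (u ^ 2 - 1) / (fc * u ^ 2 + u - fa)
  else if a = 1 ∧ d = 0 then fc * (u ^ 2 - 1) / (fc * u ^ 2 + u - fa)
  else (fc - fa + u) / (fc * u ^ 2 + u - fa)

/-- The unfused `K`-matrix as an operator on `ℂ²`: row `d` (output), column `a` (input). -/
def Kmat (fa fc u : ℂ) : Matrix (Fin 2) (Fin 2) ℂ := fun d a => Kent fa fc u a d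

/-- Entries `K̄(u)_b^c` of the unfused boundary `K̄`-matrix, parameters `fb = 𝔟`, `fd = 𝔡`. -/
def Kbent (fb fd u : ℂ) (b c : Fin 2) : ℂ :=
  if b = 0 ∧ c = 0 then ((fb - fd) * u ^ 2 - u) / (fb * u ^ 2 - u - fd)
  else if b = 0 ∧ c = 1 then fd * (u ^ 2 - 1) / (fb * u ^ 2 - u - fd)
  else if b = 1 ∧ c = 0 then fb * (u ^ 2 - 1) / (fb * u ^ 2 - u - fd)
  else (fb - fd - u) / (fb * u ^ 2 - u - fd)

/-- The operator `P` on `ℂ² ⊗ ℂ²` swapping the two tensor factors. -/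
def swapMat : Matrix (Fin 2 × Fin 2) (Fin 2 × Fin 2) ℂ :=
  fun p r => if p.1 = r.2 ∧ p.2 = r.1 then 1 else 0

/-- `Ř(u) = P ∘ R(u)`. -/
def RcheckMat (q u : ℂ) : Matrix (Fin 2 × Fin 2) (Fin 2 × Fin 2) ℂ := swapMat * Rmat q u

/-- A two-site operator `T` placed at sites `i, j` of an `n`-fold tensor power of `ℂ²`,
acting as the identity on the other factors.  Here `(ℂ²)^{⊗n}` is identified with the
function space `(Fin n → Fin 2) → ℂ` with its standard basis. -/
def emb2 {n : ℕ} (i j : Fin n) (T : Matrix (Fin 2 × Fin 2) (Fin 2 × Fin 2) ℂ) :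
    Matrix (Fin n → Fin 2) (Fin n → Fin 2) ℂ :=
  fun x y => T (x i, x j) (y i, y j) * (if ∀ k, k ≠ i → k ≠ j → x k = y k then 1 else 0)

/-- A one-site operator `T` placed at site `i` of an `n`-fold tensor power of `ℂ²`. -/
def emb1 {n : ℕ} (i : Fin n) (T : Matrix (Fin 2) (Fin 2) ℂ) :
    Matrix (Fin n → Fin 2) (Fin n → Fin 2) ℂ :=
  fun x y => T (x i) (y i) * (if ∀ k, k ≠ i → x k = y k then 1 else 0)

/-- The permutation operator `P_ω` on `(ℂ²)^{⊗n}`: it puts the `k`-th factor in position `ω(k)`. -/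
def permMat (n : ℕ) (ω : Equiv.Perm (Fin n)) :
    Matrix (Fin n → Fin 2) (Fin n → Fin 2) ℂ :=
  fun x y => if (fun k => x (ω k)) = y then 1 else 0

/-- `inv(a)` : the number of inversions of a `{0,1}`-word. -/
def invCount {I : ℕ} (x : Fin I → Fin 2) : ℕ :=
  (Finset.univ.filter (fun p : Fin I × Fin I => p.1 < p.2 ∧ x p.2 < x p.1)).card

/-- `Z_q(I;m)`. -/
def Zq (I : ℕ) (q : ℂ) (m : ℕ) : ℂ :=
  ∑ x ∈ Finset.univ.filter (fun x : Fin I → Fin 2 => (∑ j, ((x j : ℕ))) = m),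
    q ^ invCount x

/-- The projection `Π : (ℂ²)^{⊗I} → ℂ^{I+1}`, `e_{a₁…a_I} ↦ e_{Σ a_j}`. -/
def PiMat (I : ℕ) : Matrix (Fin (I + 1)) (Fin I → Fin 2) ℂ :=
  fun m x => if (∑ j, ((x j : ℕ))) = (m : ℕ) then 1 else 0

/-- The injection `Π̂ : ℂ^{I+1} → (ℂ²)^{⊗I}`. -/
def hatPiMat (I : ℕ) (q : ℂ) : Matrix (Fin I → Fin 2) (Fin (I + 1)) ℂ :=
  fun x m => if (∑ j, ((x j : ℕ))) = (m : ℕ) then q ^ invCount x / Zq I q (m : ℕ) else 0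

/-- `F = Π̂ ∘ Π`, the projector onto the `q`-exchangeable subspace. -/
def Fmat (I : ℕ) (q : ℂ) : Matrix (Fin I → Fin 2) (Fin I → Fin 2) ℂ :=
  hatPiMat I q * PiMat I

/-- Restriction of a configuration on `2I` sites to the first `I` sites. -/
def firstHalf {I : ℕ} (x : Fin (2 * I) → Fin 2) : Fin I → Fin 2 :=
  fun k => x ⟨k.1, by have := k.isLt; omega⟩

/-- Restriction of a configuration on `2I` sites to the last `I` sites. -/
def secondHalf {I : ℕ} (x : Fin (2 * I) → Fin 2) : Fin I → Fin 2 :=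
  fun k => x ⟨k.1 + I, by have := k.isLt; omega⟩

/-- `F ⊗ F` acting on `(ℂ²)^{⊗2I}`. -/
def FFmat (I : ℕ) (q : ℂ) : Matrix (Fin (2 * I) → Fin 2) (Fin (2 * I) → Fin 2) ℂ :=
  fun x y => Fmat I q (firstHalf x) (firstHalf y) * Fmat I q (secondHalf x) (secondHalf y)

/-- `Π ⊗ Π : (ℂ²)^{⊗2I} → ℂ^{I+1} ⊗ ℂ^{I+1}`. -/
def PiPiMat (I : ℕ) : Matrix (Fin (I + 1) × Fin (I + 1)) (Fin (2 * I) → Fin 2) ℂ :=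
  fun p x => PiMat I p.1 (firstHalf x) * PiMat I p.2 (secondHalf x)

/-- `Π̂ ⊗ Π̂ : ℂ^{I+1} ⊗ ℂ^{I+1} → (ℂ²)^{⊗2I}`. -/
def hatPiPiMat (I : ℕ) (q : ℂ) : Matrix (Fin (2 * I) → Fin 2) (Fin (I + 1) × Fin (I + 1)) ℂ :=
  fun x p => hatPiMat I q (firstHalf x) p.1 * hatPiMat I q (secondHalf x) p.2

/-- The fused bulk operator `R̊^I(u)` on `(ℂ²)^{⊗2I}` : the ordered product (composition,
factors written from left to right) over `a = I, I-1, …, 1` and, inside, `b = 1, 2, …, I`,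
of the operators `R(u q^{b-a})_{b, a+I}` (sites are 1-based; here `a = I - a'`, `b = b' + 1`). -/
def Rring (I : ℕ) (q u : ℂ) : Matrix (Fin (2 * I) → Fin 2) (Fin (2 * I) → Fin 2) ℂ :=
  ((List.finRange I).map (fun a' =>
    ((List.finRange I).map (fun b' =>
      emb2 (⟨b'.1, by have := b'.isLt; omega⟩ : Fin (2 * I))
        ⟨2 * I - 1 - a'.1, by have := a'.isLt; omega⟩
        (Rmat q (u * q ^ (((b'.1 : ℤ) + 1) - ((I : ℤ) - (a'.1 : ℤ))))))).prod)).prod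

/-- The fused `R`-matrix `R^I(u) = (Π⊗Π) ∘ R̊^I(u) ∘ (Π̂⊗Π̂)` on `ℂ^{I+1} ⊗ ℂ^{I+1}`;
its entry at row `(c,d)`, column `(a,b)` is `R^I(u)_{a,b}^{c,d}`. -/
def RI (I : ℕ) (q u : ℂ) :
    Matrix (Fin (I + 1) × Fin (I + 1)) (Fin (I + 1) × Fin (I + 1)) ℂ :=
  PiPiMat I * Rring I q u * hatPiPiMat I q

/-- Real powers of a positive real number, viewed in `ℂ`. -/
def qrpow (q : ℝ) (r : ℝ) : ℂ := ((q ^ r : ℝ) : ℂ)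

/-- The fused boundary operator `K̊^I(u)` on `(ℂ²)^{⊗I}` : `P_rev` composed with the ordered
product over `a = I, …, 1` of `K(u q^{(I+1)/2-a})_a` composed with the ordered product over
`b = a-1, …, 1` of `R(u² q^{I+1-a-b})_{b,a}` (sites 1-based; `a = I - a'`, `b = a - 1 - b'`). -/
def Kring (I : ℕ) (q : ℝ) (fa fc : ℂ) (u : ℂ) :
    Matrix (Fin I → Fin 2) (Fin I → Fin 2) ℂ :=
  permMat I (Fin.revPerm) *
  ((List.finRange I).map (fun a' =>
    emb1 (⟨I - 1 - a'.1, by have := a'.isLt; omega⟩ : Fin I)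
        (Kmat fa fc (u * qrpow q (((I : ℝ) + 1) / 2 - ((I : ℝ) - (a'.1 : ℝ))))) *
    ((List.finRange (I - 1 - a'.1)).map (fun b' =>
      emb2 (⟨I - a'.1 - 2 - b'.1, by have := a'.isLt; have := b'.isLt; omega⟩ : Fin I)
        ⟨I - 1 - a'.1, by have := a'.isLt; omega⟩
        (Rmat (q : ℂ)
          (u ^ 2 * (q : ℂ) ^ (((I : ℤ) + 1) - ((I : ℤ) - (a'.1 : ℤ)) -
            ((I : ℤ) - (a'.1 : ℤ) - 1 - (b'.1 : ℤ))))))).prod)).prod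

/-- The fused `K`-matrix `K^I(u) = Π ∘ K̊^I(u) ∘ Π̂` on `ℂ^{I+1}`;
its entry at row `d`, column `a` is `K^I(u)_a^d`. -/
def KI (I : ℕ) (q : ℝ) (fa fc u : ℂ) : Matrix (Fin (I + 1)) (Fin (I + 1)) ℂ :=
  PiMat I * Kring I q fa fc u * hatPiMat I (q : ℂ)

/-- `M₀(u) = u·1 + 𝐞`, `M₁(u) = u⁻¹·1 + 𝐝` in a ℂ-algebra `A`. -/
def Mop {A : Type*} [Ring A] [Algebra ℂ A] (dd ee : A) (i : Fin 2) (u : ℂ) : A :=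
  if i = 0 then algebraMap ℂ A u + ee else algebraMap ℂ A u⁻¹ + dd

/-- The fused elements `M^I_ζ(u)`. -/
def MIop {A : Type*} [Ring A] [Algebra ℂ A] (dd ee : A) (I : ℕ) (q : ℝ) (ζ : ℕ) (u : ℂ) : A :=
  ∑ z ∈ Finset.univ.filter (fun z : Fin I → Fin 2 => (∑ j, ((z j : ℕ))) = ζ),
    ((List.finRange I).map (fun a =>
      Mop dd ee (z a) (u * qrpow q (((a.1 : ℝ) + 1) - ((I : ℝ) + 1) / 2)))).prod

end

section Aux
variable {N : ℕ}

lemma permMat_mul (ω σ : Equiv.Perm (Fin N)) :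
    permMat N ω * permMat N σ = permMat N (ω * σ) := by
  ext x y
  rw [Matrix.mul_apply, Finset.sum_eq_single (fun k => x (ω k))]
  · simp [permMat, Equiv.Perm.mul_apply]
    by_cases h : (fun k => x (ω (σ k))) = y <;> simp [h]
  · intro z _ hz
    simp [permMat, Ne.symm hz]
  · simp

lemma permMat_one : permMat N 1 = 1 := by
  ext x y
  simp [permMat, Matrix.one_apply]
  by_cases h : x = y <;> simp [h]

lemma perm_emb1 (ω : Equiv.Perm (Fin N)) (i : Fin N) (T : Matrix (Fin 2) (Fin 2) ℂ) :
    permMat N ω * emb1 i T = emb1 (ω i) T * permMat N ω := by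
  ext x y
  rw [Matrix.mul_apply, Matrix.mul_apply,
    Finset.sum_eq_single (fun k => x (ω k)), Finset.sum_eq_single (fun k => y (ω⁻¹ k))]
  · have hiff : (∀ k, k ≠ i → x (ω k) = y k) ↔ (∀ k, k ≠ ω i → x k = y (ω⁻¹ k)) := by
      constructor
      · intro h k hk
        have := h (ω⁻¹ k) (fun e => hk (by rw [← e, Equiv.Perm.inv_def, Equiv.apply_symm_apply]))
        simpa using this
      · intro h k hk
        have := h (ω k) (fun e => hk (ω.injective e))
        simpa using this
    simp [permMat, emb1, hiff]
  · intro z _ hz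
    have : (fun k => z (ω k)) ≠ y := by
      intro hzz
      apply hz
      funext k
      have := congrFun hzz (ω⁻¹ k)
      simpa using this
    simp [permMat, this]
  · simp
  · intro z _ hz
    simp [permMat, Ne.symm hz]
  · simp

lemma perm_emb2 (ω : Equiv.Perm (Fin N)) (i j : Fin N)
    (T : Matrix (Fin 2 × Fin 2) (Fin 2 × Fin 2) ℂ) :
    permMat N ω * emb2 i j T = emb2 (ω i) (ω j) T * permMat N ω := by
  ext x y
  rw [Matrix.mul_apply, Matrix.mul_apply,
    Finset.sum_eq_single (fun k => x (ω k)), Finset.sum_eq_single (fun k => y (ω⁻¹ k))]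
  · have hiff : (∀ k, k ≠ i → k ≠ j → x (ω k) = y k) ↔
        (∀ k, k ≠ ω i → k ≠ ω j → x k = y (ω⁻¹ k)) := by
      constructor
      · intro h k hki hkj
        have := h (ω⁻¹ k) (fun e => hki (by rw [← e, Equiv.Perm.inv_def, Equiv.apply_symm_apply]))
          (fun e => hkj (by rw [← e, Equiv.Perm.inv_def, Equiv.apply_symm_apply]))
        simpa using this
      · intro h k hki hkj
        have := h (ω k) (fun e => hki (ω.injective e)) (fun e => hkj (ω.injective e))
        simpa using this
    simp [permMat, emb2, hiff]
  · intro z _ hz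
    have : (fun k => z (ω k)) ≠ y := by
      intro hzz
      apply hz
      funext k
      have := congrFun hzz (ω⁻¹ k)
      simpa using this
    simp [permMat, this]
  · simp
  · intro z _ hz
    simp [permMat, Ne.symm hz]
  · simp

lemma emb2_swap_mul (i j : Fin N) (_hij : i ≠ j)
    (R : Matrix (Fin 2 × Fin 2) (Fin 2 × Fin 2) ℂ) :
    emb2 i j (swapMat * R) = permMat N (Equiv.swap i j) * emb2 i j R := by
  ext x y
  rw [Matrix.mul_apply, Finset.sum_eq_single (fun k => x (Equiv.swap i j k))]
  · have h1 : (swapMat * R) (x i, x j) (y i, y j) = R (x j, x i) (y i, y j) := by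
      rw [Matrix.mul_apply, Finset.sum_eq_single (x j, x i)]
      · simp [swapMat]
      · intro s _ hs
        have : ¬((x i, x j).1 = s.2 ∧ (x i, x j).2 = s.1) := by
          rintro ⟨u1, u2⟩
          exact hs (Prod.ext u2.symm u1.symm)
        simp [swapMat, this]
      · simp
    have hcond : (∀ k, k ≠ i → k ≠ j → x k = y k) ↔
        (∀ k, k ≠ i → k ≠ j → x (Equiv.swap i j k) = y k) := by
      constructor <;> intro h k h1' h2' <;> have := h k h1' h2' <;>
        rw [Equiv.swap_apply_of_ne_of_ne h1' h2'] at *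
      · exact this
      · exact this
    simp [emb2, permMat, h1, Equiv.swap_apply_left, Equiv.swap_apply_right, ← hcond]
  · intro z _ hz
    simp [permMat, Ne.symm hz]
  · simp

lemma perm_prod_emb2 (ω : Equiv.Perm (Fin N))
    (l : List ((Fin N × Fin N) × Matrix (Fin 2 × Fin 2) (Fin 2 × Fin 2) ℂ)) :
    permMat N ω * (l.map (fun t => emb2 t.1.1 t.1.2 t.2)).prod
      = (l.map (fun t => emb2 (ω t.1.1) (ω t.1.2) t.2)).prod * permMat N ω := by
  induction l with
  | nil => simp
  | cons hd tl ih =>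
    simp only [List.map_cons, List.prod_cons]
    rw [← mul_assoc, perm_emb2, mul_assoc, ih, ← mul_assoc]

end Aux

section Aux2
variable {N : ℕ}

def fin' (N : ℕ) (hN : 0 < N) (a : ℕ) : Fin N := ⟨a % N, Nat.mod_lt _ hN⟩

lemma fin'_val_of_lt {hN : 0 < N} {a : ℕ} (h : a < N) : (fin' N hN a).1 = a :=
  Nat.mod_eq_of_lt h

def rrevFun (N m : ℕ) : Fin N → Fin N :=
  fun k => if h : k.1 < m ∧ m ≤ N then ⟨m - 1 - k.1, by omega⟩ else k

lemma rrev_invol (N m : ℕ) : Function.Involutive (rrevFun N m) := by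
  intro k
  unfold rrevFun
  by_cases h : k.1 < m ∧ m ≤ N
  · rw [dif_pos h]
    have h2 : (⟨m - 1 - k.1, by omega⟩ : Fin N).1 < m ∧ m ≤ N := ⟨by simp; omega, h.2⟩
    rw [dif_pos h2]
    exact Fin.ext (by simp; omega)
  · rw [dif_neg h, dif_neg h]

def rrev (N m : ℕ) : Equiv.Perm (Fin N) := (rrev_invol N m).toPerm

lemma rrev_val (m : ℕ) (k : Fin N) :
    ((rrev N m) k).1 = if k.1 < m ∧ m ≤ N then m - 1 - k.1 else k.1 := by
  show ((rrevFun N m) k).1 = _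
  unfold rrevFun
  by_cases h : k.1 < m ∧ m ≤ N
  · rw [dif_pos h, if_pos h]
  · rw [dif_neg h, if_neg h]

def cyc (N : ℕ) (hN : 0 < N) (n : ℕ) : Equiv.Perm (Fin N) :=
  ((List.range n).map (fun b => Equiv.swap (fin' N hN b) (fin' N hN (b + 1)))).prod

lemma cyc_succ (hN : 0 < N) (n : ℕ) :
    cyc N hN (n + 1) = cyc N hN n * Equiv.swap (fin' N hN n) (fin' N hN (n + 1)) := by
  rw [cyc, cyc, List.range_succ]
  simp

lemma cyc_val (hN : 0 < N) : ∀ (n : ℕ), n < N → ∀ (k : Fin N),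
    ((cyc N hN n) k).1 = if k.1 < n then k.1 + 1 else if k.1 = n then 0 else k.1 := by
  intro n
  induction n with
  | zero =>
    intro hn k
    have : cyc N hN 0 = 1 := by simp [cyc]
    rw [this]
    simp only [Equiv.Perm.one_apply]
    split_ifs <;> omega
  | succ n ih =>
    intro hn k
    rw [cyc_succ, Equiv.Perm.mul_apply]
    rw [ih (by omega)]
    have hsw : ((Equiv.swap (fin' N hN n) (fin' N hN (n + 1))) k).1 =
        if k.1 = n then n + 1 else if k.1 = n + 1 then n else k.1 := by
      by_cases h1 : k.1 = n
      · have hk : k = fin' N hN n := Fin.ext (by rw [fin'_val_of_lt (by omega)]; exact h1)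
        conv_lhs => rw [hk, Equiv.swap_apply_left]
        rw [fin'_val_of_lt (by omega), if_pos h1]
      · by_cases h2 : k.1 = n + 1
        · have hk : k = fin' N hN (n + 1) :=
            Fin.ext (by rw [fin'_val_of_lt (by omega)]; exact h2)
          conv_lhs => rw [hk, Equiv.swap_apply_right]
          rw [fin'_val_of_lt (by omega), if_neg h1, if_pos h2]
        · rw [Equiv.swap_apply_of_ne_of_ne
            (fun e => h1 (by rw [e]; exact fin'_val_of_lt (by omega)))
            (fun e => h2 (by rw [e]; exact fin'_val_of_lt (by omega)))]
          rw [if_neg h1, if_neg h2]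
    rw [hsw]
    split_ifs <;> omega

lemma rrev_succ (hN : 0 < N) (m : ℕ) (hm : m + 1 ≤ N) :
    rrev N (m + 1) = cyc N hN m * rrev N m := by
  apply Equiv.ext
  intro k
  rw [← Fin.val_inj, Equiv.Perm.mul_apply, cyc_val hN m (by omega), rrev_val, rrev_val]
  split_ifs <;> omega

lemma rrev_top : rrev N N = Fin.revPerm := by
  apply Equiv.ext
  intro k
  rw [← Fin.val_inj, rrev_val]
  have := k.isLt
  simp only [Fin.revPerm_apply, Fin.val_rev]
  split_ifs <;> omega
end Aux2
section Aux3
variable {N : ℕ}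

lemma perm_prod_emb2' (ω : Equiv.Perm (Fin N)) (l : List ℕ) (fi fj : ℕ → Fin N)
    (ft : ℕ → Matrix (Fin 2 × Fin 2) (Fin 2 × Fin 2) ℂ) :
    permMat N ω * (l.map (fun b => emb2 (fi b) (fj b) (ft b))).prod
      = (l.map (fun b => emb2 (ω (fi b)) (ω (fj b)) (ft b))).prod * permMat N ω := by
  induction l with
  | nil => simp
  | cons hd tl ih =>
    simp only [List.map_cons, List.prod_cons]
    rw [← mul_assoc, perm_emb2, mul_assoc, ih, ← mul_assoc]

lemma assemble1 {M : Type*} [Monoid M] (Pn Pτ Pn1 An Bn E : M)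
    (h1 : Pτ * Bn = An * Pτ) (h2 : Pn * Pτ = Pn1) :
    Pn * An * (Pτ * E) = Pn1 * (Bn * E) := by
  calc Pn * An * (Pτ * E) = Pn * ((An * Pτ) * E) := by simp only [mul_assoc]
    _ = Pn * ((Pτ * Bn) * E) := by rw [h1]
    _ = (Pn * Pτ) * (Bn * E) := by simp only [mul_assoc]
    _ = Pn1 * (Bn * E) := by rw [h2]

lemma claim1 (hN : 0 < N) (𝕋 : ℕ → Matrix (Fin 2 × Fin 2) (Fin 2 × Fin 2) ℂ) :
    ∀ n, n < N →
    ((List.range n).map (fun b =>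
        permMat N (Equiv.swap (fin' N hN b) (fin' N hN (b + 1))) *
          emb2 (fin' N hN b) (fin' N hN (b + 1)) (𝕋 b))).prod
      = permMat N (cyc N hN n) *
        ((List.range n).map (fun b => emb2 (fin' N hN b) (fin' N hN n) (𝕋 b))).prod := by
  intro n
  induction n with
  | zero =>
    intro hn
    simp [cyc, permMat_one]
  | succ n ih =>
    intro hn
    rw [List.range_succ, List.map_append, List.map_append, List.prod_append,
      List.prod_append, ih (by omega)]
    simp only [List.map_cons, List.map_nil, List.prod_cons, List.prod_nil, mul_one]
    have hτb : ∀ b ∈ List.range n,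
        emb2 ((Equiv.swap (fin' N hN n) (fin' N hN (n + 1))) (fin' N hN b))
          ((Equiv.swap (fin' N hN n) (fin' N hN (n + 1))) (fin' N hN (n + 1))) (𝕋 b)
        = emb2 (fin' N hN b) (fin' N hN n) (𝕋 b) := by
      intro b hb
      rw [List.mem_range] at hb
      rw [Equiv.swap_apply_right,
        Equiv.swap_apply_of_ne_of_ne
          (fun e => by
            have := congrArg Fin.val e
            rw [fin'_val_of_lt (by omega), fin'_val_of_lt (by omega)] at this
            omega)
          (fun e => by
            have := congrArg Fin.val e
            rw [fin'_val_of_lt (by omega), fin'_val_of_lt (by omega)] at this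
            omega)]
    have hswap : permMat N (Equiv.swap (fin' N hN n) (fin' N hN (n + 1))) *
        ((List.range n).map (fun b => emb2 (fin' N hN b) (fin' N hN (n + 1)) (𝕋 b))).prod
        = ((List.range n).map (fun b => emb2 (fin' N hN b) (fin' N hN n) (𝕋 b))).prod *
          permMat N (Equiv.swap (fin' N hN n) (fin' N hN (n + 1))) := by
      rw [perm_prod_emb2' (Equiv.swap (fin' N hN n) (fin' N hN (n + 1))) (List.range n)
        (fun b => fin' N hN b) (fun _ => fin' N hN (n + 1)) 𝕋]
      rw [List.map_congr_left hτb]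
    exact assemble1 _ _ _ _ _ _ hswap (by rw [permMat_mul, ← cyc_succ])

lemma assemble2 {M : Type*} [Monoid M] (P1 Pc Pm K K0 A B B' C REST RESTR : M)
    (hP : P1 = Pc * Pm) (h1 : P1 * K = K0 * P1) (h2 : P1 * A = B' * P1)
    (h3 : B' * Pc = Pc * C) (h4 : Pc * C = B) (h6 : Pm * REST = RESTR) :
    P1 * ((K * A) * REST) = (K0 * B) * RESTR := by
  calc P1 * ((K * A) * REST) = ((P1 * K) * A) * REST := by simp only [mul_assoc]
    _ = ((K0 * P1) * A) * REST := by rw [h1]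
    _ = (K0 * (P1 * A)) * REST := by simp only [mul_assoc]
    _ = (K0 * (B' * P1)) * REST := by rw [h2]
    _ = K0 * (B' * (P1 * REST)) := by simp only [mul_assoc]
    _ = K0 * (B' * ((Pc * Pm) * REST)) := by rw [hP]
    _ = K0 * ((B' * Pc) * (Pm * REST)) := by simp only [mul_assoc]
    _ = K0 * ((Pc * C) * RESTR) := by rw [h3, h6]
    _ = (K0 * B) * RESTR := by rw [h4, mul_assoc]

lemma core (hN : 0 < N) (𝕂 : ℕ → Matrix (Fin 2) (Fin 2) ℂ)
    (𝕋 : ℕ → ℕ → Matrix (Fin 2 × Fin 2) (Fin 2 × Fin 2) ℂ) :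
    ∀ m, m ≤ N →
    permMat N (rrev N m) * (((List.range m).reverse).map (fun c =>
        emb1 (fin' N hN c) (𝕂 c) *
        ((List.range c).map (fun b =>
          emb2 (fin' N hN (c - 1 - b)) (fin' N hN c) (𝕋 c b))).prod)).prod
      = (((List.range m).reverse).map (fun c =>
        emb1 (fin' N hN 0) (𝕂 c) *
        ((List.range c).map (fun b =>
          permMat N (Equiv.swap (fin' N hN b) (fin' N hN (b + 1))) *
            emb2 (fin' N hN b) (fin' N hN (b + 1)) (𝕋 c b))).prod)).prod := by
  intro m
  induction m with
  | zero =>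
    intro hm
    have h1 : rrev N 0 = 1 := Equiv.ext fun k => by rw [← Fin.val_inj, rrev_val]; simp
    simp [h1, permMat_one]
  | succ m ih =>
    intro hm
    rw [List.range_succ, List.reverse_append]
    simp only [List.reverse_cons, List.reverse_nil, List.nil_append, List.cons_append,
      List.map_cons, List.prod_cons]
    have hswap1 : permMat N (rrev N (m + 1)) * emb1 (fin' N hN m) (𝕂 m)
        = emb1 (fin' N hN 0) (𝕂 m) * permMat N (rrev N (m + 1)) := by
      rw [perm_emb1]
      have h : (rrev N (m + 1)) (fin' N hN m) = fin' N hN 0 := by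
        rw [← Fin.val_inj, rrev_val, fin'_val_of_lt (show m < N by omega),
          fin'_val_of_lt (show 0 < N by omega)]
        rw [if_pos ⟨by omega, by omega⟩]
        omega
      rw [h]
    have hswap2 : permMat N (rrev N (m + 1)) * ((List.range m).map (fun b =>
          emb2 (fin' N hN (m - 1 - b)) (fin' N hN m) (𝕋 m b))).prod
        = ((List.range m).map (fun b =>
          emb2 (fin' N hN (b + 1)) (fin' N hN 0) (𝕋 m b))).prod *
          permMat N (rrev N (m + 1)) := by
      rw [perm_prod_emb2' (rrev N (m + 1)) (List.range m)
        (fun b => fin' N hN (m - 1 - b)) (fun _ => fin' N hN m) (𝕋 m)]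
      congr 1
      apply congrArg List.prod
      apply List.map_congr_left
      intro b hb
      rw [List.mem_range] at hb
      have e1 : (rrev N (m + 1)) (fin' N hN (m - 1 - b)) = fin' N hN (b + 1) := by
        rw [← Fin.val_inj, rrev_val, fin'_val_of_lt (show m - 1 - b < N by omega),
          fin'_val_of_lt (show b + 1 < N by omega), if_pos ⟨by omega, by omega⟩]
        omega
      have e2 : (rrev N (m + 1)) (fin' N hN m) = fin' N hN 0 := by
        rw [← Fin.val_inj, rrev_val, fin'_val_of_lt (show m < N by omega),
          fin'_val_of_lt (show 0 < N by omega), if_pos ⟨by omega, by omega⟩]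
        omega
      rw [e1, e2]
    have hswap3 : ((List.range m).map (fun b =>
          emb2 (fin' N hN (b + 1)) (fin' N hN 0) (𝕋 m b))).prod * permMat N (cyc N hN m)
        = permMat N (cyc N hN m) * ((List.range m).map (fun b =>
          emb2 (fin' N hN b) (fin' N hN m) (𝕋 m b))).prod := by
      rw [perm_prod_emb2' (cyc N hN m) (List.range m)
        (fun b => fin' N hN b) (fun _ => fin' N hN m) (𝕋 m)]
      congr 1
      apply congrArg List.prod
      apply List.map_congr_left
      intro b hb
      rw [List.mem_range] at hb
      have e1 : (cyc N hN m) (fin' N hN b) = fin' N hN (b + 1) := by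
        rw [← Fin.val_inj, cyc_val hN m (by omega), fin'_val_of_lt (show b < N by omega),
          fin'_val_of_lt (show b + 1 < N by omega), if_pos (by omega)]
      have e2 : (cyc N hN m) (fin' N hN m) = fin' N hN 0 := by
        rw [← Fin.val_inj, cyc_val hN m (by omega), fin'_val_of_lt (show m < N by omega),
          fin'_val_of_lt (show 0 < N by omega), if_neg (by omega), if_pos rfl]
      rw [e1, e2]
    exact assemble2 _ _ _ _ _ _ _ _ _ _ _
      (by rw [rrev_succ hN m hm, ← permMat_mul])
      hswap1 hswap2 hswap3 (claim1 hN (𝕋 m) m (by omega)).symm (ih (by omega))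

end Aux3
section Aux4

lemma finRange_map_prod_eq {M : Type*} [Monoid M] :
    ∀ (n : ℕ) (f : Fin n → M) (g : ℕ → M),
      (∀ (b : ℕ) (hb : b < n), f ⟨b, hb⟩ = g b) →
      ((List.finRange n).map f).prod = ((List.range n).map g).prod := by
  intro n
  induction n with
  | zero => intro f g h; simp
  | succ n ih =>
    intro f g h
    rw [List.finRange_succ, List.range_succ_eq_map]
    simp only [List.map_cons, List.prod_cons, List.map_map]
    have h0 : f 0 = g 0 := h 0 (by omega)
    rw [h0]
    congr 1
    exact ih (f ∘ Fin.succ) (g ∘ Nat.succ) (fun b hb => h (b + 1) (by omega))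

lemma range_reverse_eq (n : ℕ) :
    (List.range n).reverse = (List.range n).map (fun a => n - 1 - a) := by
  induction n with
  | zero => simp
  | succ n ih =>
    conv_lhs => rw [List.range_succ, List.reverse_append]
    simp only [List.reverse_cons, List.reverse_nil, List.nil_append, List.cons_append]
    rw [ih]
    conv_rhs => rw [List.range_succ_eq_map]
    simp only [List.map_cons, List.map_map]
    have he : ((fun a => n + 1 - 1 - a) ∘ Nat.succ) = (fun a => n - 1 - a) :=
      funext fun a => by simp only [Function.comp_apply]; omega
    rw [he]
    congr 1

lemma prod_reverse_flip {M : Type*} [Monoid M] (n : ℕ) (fac : ℕ → M) :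
    ((List.range n).map (fun a => fac (n - 1 - a))).prod
      = ((List.range n).reverse.map fac).prod := by
  rw [range_reverse_eq, List.map_map]
  rfl

end Aux4

noncomputable def KKfam (I : ℕ) (q : ℝ) (fa fc : ℂ) (u : ℂ) : ℕ → Matrix (Fin 2) (Fin 2) ℂ :=
  fun c => Kmat fa fc (u * qrpow q (((I : ℝ) + 1) / 2 - ((I : ℝ) - ((I - 1 - c : ℕ) : ℝ))))

noncomputable def TTfam (I : ℕ) (q u : ℂ) : ℕ → ℕ → Matrix (Fin 2 × Fin 2) (Fin 2 × Fin 2) ℂ :=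
  fun c b => Rmat q (u ^ 2 * q ^ (((I : ℤ) + 1) - ((I : ℤ) - ((I - 1 - c : ℕ) : ℤ)) -
    ((I : ℤ) - ((I - 1 - c : ℕ) : ℤ) - 1 - (b : ℤ))))

/-- **Braided form of the fused boundary operator**:
`K̊^I(u) = ∏_{a=I,…,1} [ K(u q^{(I+1)/2−a})₁ ∘ ∏_{b=a−1,…,1} Ř(u² q^{I+1−a−b})_{a−b} ]`,
both products in decreasing order of the index (here `a = I − a'`, `b = a − 1 − b'`, so that
`a − b = b' + 1`, and `Ř(v)_m` acts on the `m`-th and `(m+1)`-th tensor factors, 1-based). -/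
theorem braided_fused_K (I : ℕ) (hI : 1 ≤ I) (q : ℝ) (hq0 : 0 < q) (hq1 : q < 1)
    (fa fc : ℝ) (u : ℂ) (hu : u ≠ 0)
    (hden : ∀ a : ℕ, 1 ≤ a → a ≤ I →
      (fc : ℂ) * (u * qrpow q (((I : ℝ) + 1) / 2 - (a : ℝ))) ^ 2 +
        u * qrpow q (((I : ℝ) + 1) / 2 - (a : ℝ)) - (fa : ℂ) ≠ 0)
    (hreg : ∀ m : ℤ, -(I : ℤ) ≤ m → m ≤ (I : ℤ) → u ^ 2 * (q : ℂ) ^ m ≠ 1) :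
    Kring I q (fa : ℂ) (fc : ℂ) u =
      ((List.finRange I).map (fun a' =>
        emb1 (⟨0, by have := a'.isLt; omega⟩ : Fin I)
            (Kmat (fa : ℂ) (fc : ℂ)
              (u * qrpow q (((I : ℝ) + 1) / 2 - ((I : ℝ) - (a'.1 : ℝ))))) *
        ((List.finRange (I - 1 - a'.1)).map (fun b' =>
          emb2 (⟨b'.1, by have := a'.isLt; have := b'.isLt; omega⟩ : Fin I)
            ⟨b'.1 + 1, by have := a'.isLt; have := b'.isLt; omega⟩
            (RcheckMat (q : ℂ)
              (u ^ 2 * (q : ℂ) ^ (((I : ℤ) + 1) - ((I : ℤ) - (a'.1 : ℤ)) -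
                ((I : ℤ) - (a'.1 : ℤ) - 1 - (b'.1 : ℤ))))))).prod)).prod := by
  have hN : 0 < I := hI
  have step1 : Kring I q (fa : ℂ) (fc : ℂ) u =
      permMat I (rrev I I) *
      (((List.range I).reverse).map (fun c =>
        emb1 (fin' I hN c) (KKfam I q (fa : ℂ) (fc : ℂ) u c) *
        ((List.range c).map (fun b =>
          emb2 (fin' I hN (c - 1 - b)) (fin' I hN c) (TTfam I (q : ℂ) u c b))).prod)).prod := by
    unfold Kring
    rw [← rrev_top]
    congr 1
    rw [← prod_reverse_flip]
    apply finRange_map_prod_eq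
    intro a ha
    simp only [Fin.val_mk, KKfam, TTfam]
    rw [show I - 1 - (I - 1 - a) = a from by omega]
    rw [show (⟨I - 1 - a, by omega⟩ : Fin I) = fin' I hN (I - 1 - a) from
        Fin.ext (by rw [fin'_val_of_lt (by omega)])]
    refine congrArg₂ (· * ·) rfl ?_
    apply finRange_map_prod_eq
    intro b hb
    simp only [Fin.val_mk]
    rw [show (⟨I - a - 2 - b, by omega⟩ : Fin I) = fin' I hN (I - 1 - a - 1 - b) from
        Fin.ext (by rw [fin'_val_of_lt (by omega)]; simp only [Fin.val_mk]; omega)]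
  have step3 : (((List.range I).reverse).map (fun c =>
        emb1 (fin' I hN 0) (KKfam I q (fa : ℂ) (fc : ℂ) u c) *
        ((List.range c).map (fun b =>
          permMat I (Equiv.swap (fin' I hN b) (fin' I hN (b + 1))) *
            emb2 (fin' I hN b) (fin' I hN (b + 1)) (TTfam I (q : ℂ) u c b))).prod)).prod =
      ((List.finRange I).map (fun a' =>
        emb1 (⟨0, by have := a'.isLt; omega⟩ : Fin I)
            (Kmat (fa : ℂ) (fc : ℂ)
              (u * qrpow q (((I : ℝ) + 1) / 2 - ((I : ℝ) - (a'.1 : ℝ))))) *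
        ((List.finRange (I - 1 - a'.1)).map (fun b' =>
          emb2 (⟨b'.1, by have := a'.isLt; have := b'.isLt; omega⟩ : Fin I)
            ⟨b'.1 + 1, by have := a'.isLt; have := b'.isLt; omega⟩
            (RcheckMat (q : ℂ)
              (u ^ 2 * (q : ℂ) ^ (((I : ℤ) + 1) - ((I : ℤ) - (a'.1 : ℤ)) -
                ((I : ℤ) - (a'.1 : ℤ) - 1 - (b'.1 : ℤ))))))).prod)).prod := by
    refine Eq.symm ?_
    rw [← prod_reverse_flip]
    apply finRange_map_prod_eq
    intro a ha
    simp only [Fin.val_mk, KKfam, TTfam]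
    rw [show I - 1 - (I - 1 - a) = a from by omega]
    rw [show (⟨0, by omega⟩ : Fin I) = fin' I hN 0 from
        Fin.ext (by rw [fin'_val_of_lt hN])]
    refine congrArg₂ (· * ·) rfl ?_
    apply finRange_map_prod_eq
    intro b hb
    simp only [Fin.val_mk]
    rw [show (⟨b, by omega⟩ : Fin I) = fin' I hN b from
        Fin.ext (by rw [fin'_val_of_lt (by omega)]),
      show (⟨b + 1, by omega⟩ : Fin I) = fin' I hN (b + 1) from
        Fin.ext (by rw [fin'_val_of_lt (by omega)])]
    unfold RcheckMat
    rw [emb2_swap_mul _ _ (fun e => by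
      have := congrArg Fin.val e
      rw [fin'_val_of_lt (by omega), fin'_val_of_lt (by omega)] at this
      omega)]
  exact step1.trans
    ((core hN (KKfam I q (fa : ℂ) (fc : ℂ) u) (TTfam I (q : ℂ) u) I le_rfl).trans step3)
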